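/- Let q = 2^(2e+1) with e ≥ 1, σ = 2^(e+1), and let δ ∈ F_q with δ ≠ 0, δ ≠ 1 and absolute trace Tr_{F_q/F_2}(δ) = 1. Set a = δ^(σ-1) + 1. Then Tr_{F_q/F_2}(a^(σ+1)) = 0, and the F_2-linearized equation (a^(σ/2)+1) u^σ + a u^2 + u = 0 has exactly 4 solutions u ∈ F_q. -/

import Mathlib

set_option maxHeartbeats 1000000 in
/-- For `q = 2^(2e+1)`, `σ = 2^(e+1)`, `δ ∈ F_q` with `δ ≠ 0`, `δ ≠ 1` and
absolute trace 1, set `a = δ^(σ-1) + 1`. Then `Tr(a^(σ+1)) = 0`, and the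
equation `(a^(σ/2)+1)u^σ + au² + u = 0` has exactly 4 solutions in `F_q`. -/
theorem stmt_17 (e : ℕ) (he : 1 ≤ e) (F : Type*) [Field F] [Fintype F]
    (hF : Fintype.card F = 2 ^ (2 * e + 1)) (δ : F) (hδ0 : δ ≠ 0) (hδ1 : δ ≠ 1)
    (hδtr : ∑ i ∈ Finset.range (2 * e + 1), δ ^ (2 ^ i) = 1)
    (a : F) (ha : a = δ ^ (2 ^ (e + 1)) * δ⁻¹ + 1) :
    (∑ i ∈ Finset.range (2 * e + 1), (a ^ (2 ^ (e + 1) + 1)) ^ (2 ^ i) = 0) ∧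
    {u : F | (a ^ (2 ^ e) + 1) * u ^ (2 ^ (e + 1)) + a * u ^ 2 + u = 0}.ncard
      = 4 := by
  haveI hchar : CharP F 2 := by
    have h0 : ((2:ℕ):F) = 0 := by
      have := FiniteField.cast_card_eq_zero F
      rw [hF] at this
      push_cast at this
      exact pow_eq_zero_iff (by positivity) |>.mp this
    have hd : ringChar F ∣ 2 := ringChar.dvd h0
    have hrc : ringChar F = 2 := ((Nat.dvd_prime Nat.prime_two).mp hd).resolve_left
      (CharP.ringChar_ne_one (R := F))
    exact hrc ▸ ringChar.charP F
  haveI : Fact (Nat.Prime 2) := ⟨Nat.prime_two⟩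
  haveI : DecidableEq F := Classical.decEq F
  have h20 : (2:F) = 0 := CharTwo.two_eq_zero
  have h2 : ∀ x : F, x + x = 0 := CharTwo.add_self_eq_zero
  have hEq : ∀ x y : F, x + y = 0 → x = y := fun x y h => by linear_combination h - h2 y
  have hq : ∀ x : F, x ^ 2 ^ (2*e+1) = x := fun x => by rw [← hF]; exact FiniteField.pow_card x
  have hshift : ∀ (x : F) (j : ℕ), x ^ 2 ^ (2*e+1 + j) = x ^ 2 ^ j := by
    intro x j; rw [pow_add, pow_mul, hq]
  have hadd : ∀ (x y : F) (m : ℕ), (x+y)^(2^m) = x^(2^m) + y^(2^m) := fun x y m =>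
    add_pow_char_pow x y 2 m
  have hfs : ∀ (m : ℕ) (s : Finset ℕ) (g : ℕ → F),
      (∑ i ∈ s, g i)^(2^m) = ∑ i ∈ s, (g i)^(2^m) := by
    intro m s g
    exact map_sum (iterateFrobenius F 2 m) g s
  -- trace lemmas
  have tr_add : ∀ x y : F, (∑ i ∈ Finset.range (2*e+1), (x+y)^(2^i))
      = (∑ i ∈ Finset.range (2*e+1), x^(2^i)) + ∑ i ∈ Finset.range (2*e+1), y^(2^i) := by
    intro x y
    rw [← Finset.sum_add_distrib]
    exact Finset.sum_congr rfl fun i _ => hadd x y i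
  have tr_sq : ∀ x : F, (∑ i ∈ Finset.range (2*e+1), (x^2)^(2^i))
      = ∑ i ∈ Finset.range (2*e+1), x^(2^i) := by
    intro x
    have hre : ∀ i : ℕ, (x^2)^(2^i) = x^(2^(i+1)) := by
      intro i; rw [← pow_mul, ← pow_succ']
    rw [Finset.sum_congr rfl fun i _ => hre i]
    have e1 := Finset.sum_range_succ' (fun i => x^(2^i)) (2*e+1)
    have e2 := Finset.sum_range_succ (fun i => x^(2^i)) (2*e+1)
    rw [hq] at e2
    linear_combination e2 - e1
  have tr_pow : ∀ (m : ℕ) (x : F), (∑ i ∈ Finset.range (2*e+1), (x^(2^m))^(2^i))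
      = ∑ i ∈ Finset.range (2*e+1), x^(2^i) := by
    intro m
    induction m with
    | zero => intro x; norm_num
    | succ k ih =>
      intro x
      have hx : x^(2^(k+1)) = (x^(2^k))^2 := by rw [← pow_mul, pow_succ]
      rw [hx, tr_sq (x^(2^k)), ih]
  have tr_one : (∑ i ∈ Finset.range (2*e+1), (1:F)^(2^i)) = 1 := by
    simp only [one_pow, Finset.sum_const, Finset.card_range, nsmul_eq_mul, mul_one]
    push_cast
    rw [h20]; ring
  -- part 1
  have hδσ0 : δ ^ (2^(e+1)) ≠ 0 := pow_ne_zero _ hδ0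
  have hbσ : (δ ^ (2^(e+1)) * δ⁻¹) ^ (2^(e+1)) = δ^2 * (δ^(2^(e+1)))⁻¹ := by
    rw [mul_pow, ← pow_mul, ← pow_add, ← inv_pow]
    rw [show (e+1) + (e+1) = 2*e+1 + 1 from by ring, hshift]
    norm_num
  have hbb : (δ ^ (2^(e+1)) * δ⁻¹) ^ (2^(e+1)) * (δ ^ (2^(e+1)) * δ⁻¹) = δ := by
    rw [hbσ]
    generalize δ ^ (2^(e+1)) = D at hδσ0 ⊢
    field_simp
  have ha1 : a ^ (2^(e+1)+1) = δ + ((δ ^ (2^(e+1)) * δ⁻¹) ^ (2^(e+1))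
      + ((δ ^ (2^(e+1)) * δ⁻¹) + 1)) := by
    rw [ha]
    generalize (δ ^ (2^(e+1)) * δ⁻¹) = b at hbb ⊢
    rw [pow_add, pow_one, hadd, one_pow]
    generalize b^(2^(e+1)) = B at hbb ⊢
    linear_combination hbb
  have part1 : (∑ i ∈ Finset.range (2*e+1), (a ^ (2 ^ (e + 1) + 1)) ^ (2 ^ i)) = 0 := by
    rw [Finset.sum_congr rfl fun i _ => by rw [ha1]]
    rw [tr_add, tr_add, tr_add, tr_pow, tr_one, hδtr]
    linear_combination h2 (∑ i ∈ Finset.range (2*e+1), (δ ^ (2^(e+1)) * δ⁻¹)^(2^i)) + h2 1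
  refine ⟨part1, ?_⟩
  -- multiples of n in the exponent tower collapse
  have hmul : ∀ (x : F) (m j : ℕ), x ^ 2^(m*(2*e+1)+j) = x ^ 2^j := by
    intro x m
    induction m with
    | zero => intro j; norm_num
    | succ k ih =>
      intro j
      rw [show (k+1)*(2*e+1)+j = 2*e+1 + (k*(2*e+1)+j) from by ring, hshift, ih]
  have tr_zero : (∑ i ∈ Finset.range (2*e+1), (0:F)^(2^i)) = 0 :=
    Finset.sum_eq_zero fun i _ => zero_pow (by positivity)
  -- the e-twisted trace agrees with the trace
  have htr' : ∀ x : F, (∑ k ∈ Finset.range (2*e+1), x^(2^(e*k)))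
      = ∑ i ∈ Finset.range (2*e+1), x^(2^i) := by
    intro x
    set t := ∑ k ∈ Finset.range (2*e+1), x^(2^(e*k)) with ht
    have step1 : t^(2^e) = t := by
      rw [ht, hfs]
      have hterm : ∀ k : ℕ, (x^(2^(e*k)))^(2^e) = x^(2^(e*(k+1))) := by
        intro k
        rw [← pow_mul, ← pow_add, show e*k+e = e*(k+1) from by ring]
      rw [Finset.sum_congr rfl fun k _ => hterm k]
      have e1 := Finset.sum_range_succ' (fun k => x^(2^(e*k))) (2*e+1)
      have e2 := Finset.sum_range_succ (fun k => x^(2^(e*k))) (2*e+1)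
      rw [show e*(2*e+1) = e*(2*e+1)+0 from by ring, hmul x e 0] at e2
      simp only [Nat.mul_zero, pow_zero, pow_one] at e1 e2
      linear_combination e2 - e1
    have k1 : t^(2^(2*e+1)) = ((t^(2^e))^(2^e))^(2:ℕ) := by
      rw [← pow_mul, ← pow_mul]
      congr 1
      ring
    rw [hq, step1, step1] at k1
    have hcase : t = 0 ∨ t = 1 := by
      have hz : t*(t-1) = 0 := by linear_combination -k1
      rcases mul_eq_zero.mp hz with h | h
      · exact Or.inl h
      · exact Or.inr (sub_eq_zero.mp h)
    have hTrt : (∑ i ∈ Finset.range (2*e+1), t^(2^i)) = ∑ i ∈ Finset.range (2*e+1), x^(2^i) := by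
      calc ∑ i ∈ Finset.range (2*e+1), t^(2^i)
          = ∑ i ∈ Finset.range (2*e+1), ∑ k ∈ Finset.range (2*e+1), (x^(2^(e*k)))^(2^i) := by
            refine Finset.sum_congr rfl fun i _ => ?_
            rw [ht, hfs]
        _ = ∑ k ∈ Finset.range (2*e+1), ∑ i ∈ Finset.range (2*e+1), (x^(2^(e*k)))^(2^i) :=
            Finset.sum_comm
        _ = ∑ k ∈ Finset.range (2*e+1), ∑ i ∈ Finset.range (2*e+1), x^(2^i) :=
            Finset.sum_congr rfl fun k _ => tr_pow (e*k) x
        _ = (2*e+1) • (∑ i ∈ Finset.range (2*e+1), x^(2^i)) := by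
            rw [Finset.sum_const, Finset.card_range]
        _ = ∑ i ∈ Finset.range (2*e+1), x^(2^i) := by
            rw [nsmul_eq_mul]; push_cast; rw [h20]; ring
    rcases hcase with h | h
    · rw [h] at hTrt ⊢
      rw [tr_zero] at hTrt
      exact hTrt
    · rw [h] at hTrt ⊢
      rw [tr_one] at hTrt
      exact hTrt
  -- a ≠ 0 and a ≠ 1
  have ha0 : a ≠ 0 := by
    intro h0a
    have hb1 : δ ^ (2^(e+1)) * δ⁻¹ = 1 := by
      have := hEq (δ ^ (2^(e+1)) * δ⁻¹) 1 (by rw [← ha]; exact h0a)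
      exact this
    have hδσ : δ ^ (2^(e+1)) = δ := (mul_inv_eq_one₀ hδ0).mp hb1
    have h5 : (δ^(2^(e+1)))^(2^(e+1)) = δ^(2^1) := by
      rw [← pow_mul, ← pow_add, show (e+1)+(e+1) = 2*e+1+1 from by ring, hshift]
    rw [hδσ, hδσ] at h5
    have : δ*(δ-1) = 0 := by linear_combination -h5
    rcases mul_eq_zero.mp this with h | h
    · exact hδ0 h
    · exact hδ1 (sub_eq_zero.mp h)
  have haNe1 : a ≠ 1 := by
    intro h1a
    have hb0 : δ ^ (2^(e+1)) * δ⁻¹ = 0 := by linear_combination h1a - ha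
    exact absurd hb0 (mul_ne_zero hδσ0 (inv_ne_zero hδ0))
  have hcc : a ^ (2^e) + 1 ≠ 0 := by
    have h3 : (a+1)^(2^e) = a^(2^e) + 1 := by rw [hadd, one_pow]
    rw [← h3]
    exact pow_ne_zero _ (fun h => haNe1 (hEq a 1 h))
  -- existence of z with z^(2^e) + z = a^(σ+1)
  have hTrc : (∑ k ∈ Finset.range (2*e+1), (a ^ (2^(e+1)+1))^(2^(e*k))) = 0 := by
    rw [htr' (a ^ (2^(e+1)+1))]; exact part1
  have hTrδ' : (∑ k ∈ Finset.range (2*e+1), δ^(2^(e*k))) = 1 := by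
    rw [htr' δ]; exact hδtr
  have hterm : ∀ (y : F) (k : ℕ), (y^(2^(e*k)))^(2^e) = y^(2^(e*(k+1))) := by
    intro y k; rw [← pow_mul, ← pow_add, show e*k+e = e*(k+1) from by ring]
  obtain ⟨z, hz⟩ : ∃ z : F, z^(2^e) + z = a ^ (2^(e+1)+1) := by
    refine ⟨∑ k ∈ Finset.range (2*e+1),
      (∑ j ∈ Finset.range k, (a ^ (2^(e+1)+1))^(2^(e*j))) * δ^(2^(e*k)), ?_⟩
    have hstep : (∑ k ∈ Finset.range (2*e+1),
        (∑ j ∈ Finset.range k, (a ^ (2^(e+1)+1))^(2^(e*j))) * δ^(2^(e*k)))^(2^e)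
        = ∑ k ∈ Finset.range (2*e+1),
          ((∑ j ∈ Finset.range (k+1), (a ^ (2^(e+1)+1))^(2^(e*j))) + a ^ (2^(e+1)+1))
            * δ^(2^(e*(k+1))) := by
      rw [hfs]
      refine Finset.sum_congr rfl fun k _ => ?_
      rw [mul_pow, hfs, hterm δ k]
      congr 1
      rw [Finset.sum_congr rfl fun j _ => hterm (a ^ (2^(e+1)+1)) j]
      have e1 := Finset.sum_range_succ' (fun j => (a ^ (2^(e+1)+1))^(2^(e*j))) k
      simp only [Nat.mul_zero, pow_zero, pow_one] at e1
      linear_combination -e1 - h2 (a ^ (2^(e+1)+1))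
    rw [hstep]
    have e1 := Finset.sum_range_succ' (fun k =>
      ((∑ j ∈ Finset.range k, (a ^ (2^(e+1)+1))^(2^(e*j))) + a ^ (2^(e+1)+1))
        * δ^(2^(e*k))) (2*e+1)
    have e2 := Finset.sum_range_succ (fun k =>
      ((∑ j ∈ Finset.range k, (a ^ (2^(e+1)+1))^(2^(e*j))) + a ^ (2^(e+1)+1))
        * δ^(2^(e*k))) (2*e+1)
    simp only [Finset.sum_range_zero, Nat.mul_zero, pow_zero, pow_one, zero_add] at e1
    rw [show e*(2*e+1) = e*(2*e+1)+0 from by ring, hmul δ e 0] at e2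
    simp only [pow_zero, pow_one] at e2
    rw [hTrc, zero_add] at e2
    have hsplit : (∑ k ∈ Finset.range (2*e+1),
        ((∑ j ∈ Finset.range k, (a ^ (2^(e+1)+1))^(2^(e*j))) + a ^ (2^(e+1)+1))
          * δ^(2^(e*k)))
        = (∑ k ∈ Finset.range (2*e+1),
            (∑ j ∈ Finset.range k, (a ^ (2^(e+1)+1))^(2^(e*j))) * δ^(2^(e*k)))
          + (a ^ (2^(e+1)+1)) * ∑ k ∈ Finset.range (2*e+1), δ^(2^(e*k)) := by
      rw [Finset.mul_sum, ← Finset.sum_add_distrib]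
      exact Finset.sum_congr rfl fun k _ => by ring
    rw [hTrδ', mul_one] at hsplit
    linear_combination e2 - e1 + hsplit + h2 (∑ k ∈ Finset.range (2*e+1),
      (∑ j ∈ Finset.range k, (a ^ (2^(e+1)+1))^(2^(e*j))) * δ^(2^(e*k)))
  -- basic powers of a
  have aσ0 : a^(2^(e+1)) ≠ 0 := pow_ne_zero _ ha0
  have ae0 : a^(2^e) ≠ 0 := pow_ne_zero _ ha0
  have hca : a^(2^(e+1)+1) = a^(2^(e+1)) * a := by rw [pow_add, pow_one]
  have ha2 : a^(2^(e+1)) = (a^(2^e))^2 := by rw [← pow_mul, ← pow_succ]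
  have hw0 : a^(2^e) * a ≠ 0 := mul_ne_zero ae0 ha0
  have hwσ : (a^(2^e) * a)^(2^(e+1)) = a * a^(2^(e+1)) := by
    rw [mul_pow, ← pow_mul, show 2^e * 2^(e+1) = 2^(2*e+1) from by ring, hq]
  have hw2 : (a^(2^e) * a)^2 = a^(2^(e+1)) * a^2 := by rw [mul_pow, ← ha2]
  -- square root of z and the element u1
  have hy2 : (z^(2^(2*e)))^2 = z := by rw [← pow_mul, ← pow_succ, hq]
  have hyσ : (z^(2^(2*e)))^(2^(e+1)) = z^(2^e) := by
    rw [← pow_mul, show 2^(2*e) * 2^(e+1) = 2^(2*e+1+e) from by ring, hshift]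
  have hzσe : z^(2^e) = a^(2^(e+1)+1) + z := by linear_combination hz - h2 z
  have hu1σ : (z^(2^(2*e)) * (a^(2^e) * a)⁻¹)^(2^(e+1))
      = z^(2^e) * (a * a^(2^(e+1)))⁻¹ := by rw [mul_pow, hyσ, inv_pow, hwσ]
  have hu1sq : (z^(2^(2*e)) * (a^(2^e) * a)⁻¹)^2
      = z * (a^(2^(e+1)) * a^2)⁻¹ := by rw [mul_pow, hy2, inv_pow, hw2]
  -- u1 satisfies the auxiliary equation E
  have hE1 : (z^(2^(2*e)) * (a^(2^e) * a)⁻¹)^(2^(e+1))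
      + a * (z^(2^(2*e)) * (a^(2^e) * a)⁻¹)^2 + 1 = 0 := by
    rw [hu1σ, hu1sq, hzσe, hca]
    rw [ha2]
    generalize hB : a^(2^e) = B at *
    field_simp
    linear_combination (B^2*a + z) * h20
  -- u0 = (a^(2^e)*a)⁻¹ is in S
  have hu0S : (a ^ (2^e) + 1) * ((a^(2^e) * a)⁻¹) ^ (2^(e+1))
      + a * ((a^(2^e) * a)⁻¹) ^ 2 + (a^(2^e) * a)⁻¹ = 0 := by
    rw [inv_pow, inv_pow, hwσ, hw2, ha2]
    generalize hB : a^(2^e) = B at *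
    field_simp
    linear_combination (1 + B) * h20
  -- u0 does not satisfy E, i.e. its E-value is 1
  have hu0E : ((a^(2^e) * a)⁻¹) ^ (2^(e+1)) + a * ((a^(2^e) * a)⁻¹) ^ 2 = 0 := by
    rw [inv_pow, inv_pow, hwσ, hw2, ha2]
    generalize hB : a^(2^e) = B at *
    field_simp
    linear_combination (1) * h20
  set u1 : F := z^(2^(2*e)) * (a^(2^e) * a)⁻¹ with hu1def
  set u0 : F := (a^(2^e) * a)⁻¹ with hu0def
  have hE : u1^(2^(e+1)) = a*u1^2 + 1 := by
    linear_combination hE1 - h2 (a*u1^2+1)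
  have hE2 : u1 = a^(2^e) * u1^(2^(e+1)) + 1 := by
    have h6 := congrArg (fun x : F => x^(2^e)) hE
    rw [← pow_mul, show 2^(e+1) * 2^e = 2^(2*e+1) from by ring, hq] at h6
    rw [hadd, one_pow, mul_pow, ← pow_mul,
      show (2:ℕ) * 2^e = 2^(e+1) from by rw [← pow_succ']] at h6
    exact h6
  have hu1S : (a ^ (2^e) + 1) * u1 ^ (2^(e+1)) + a * u1^2 + u1 = 0 := by
    linear_combination hE - hE2 + h2 (a*u1^2) + h2 u1
  have hSadd : ∀ u v : F, ((a^(2^e)+1)*u^(2^(e+1)) + a*u^2 + u = 0) →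
      ((a^(2^e)+1)*v^(2^(e+1)) + a*v^2 + v = 0) →
      ((a^(2^e)+1)*(u+v)^(2^(e+1)) + a*(u+v)^2 + (u+v) = 0) := by
    intro u v hu hv
    rw [hadd u v (e+1)]
    linear_combination hu + hv + h2 (a*u*v)
  -- distinctness
  have hu0ne0 : u0 ≠ 0 := inv_ne_zero hw0
  have hu1ne0 : u1 ≠ 0 := by
    intro h
    rw [h, zero_pow (by positivity), zero_pow (by norm_num : (2:ℕ) ≠ 0)] at hE1
    simp at hE1
  have hu1neu0 : u1 ≠ u0 := by
    intro h
    rw [h] at hE1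
    have : (1:F) = 0 := by linear_combination hE1 - hu0E
    exact one_ne_zero this
  -- the quartic polynomial bounding the number of roots
  set p : Polynomial F := Polynomial.C (a^(2^(e+1)) * a^2) * Polynomial.X^4
    + Polynomial.C (a^(2^(e+1)) + (a^(2^e)+1)*a + (a^(2^e)+1)^(2^(e+1)) * (a^(2^e)+1)^2)
      * Polynomial.X^2
    + Polynomial.C (a^(2^e)+1) * Polynomial.X with hpdef
  have hp1 : p.coeff 1 = a^(2^e)+1 := by
    rw [hpdef]
    simp only [Polynomial.coeff_add, Polynomial.coeff_C_mul, Polynomial.coeff_X_pow,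
      Polynomial.coeff_X_one]
    norm_num
  have hp0 : p ≠ 0 := fun h => hcc (by rw [h] at hp1; simpa using hp1.symm)
  have hdeg : p.natDegree ≤ 4 := by
    rw [hpdef]
    compute_degree
  have hroots : ∀ u : F, ((a^(2^e)+1)*u^(2^(e+1)) + a*u^2 + u = 0) → p.IsRoot u := by
    intro u hu
    have hL : (a^(2^e)+1) * u^(2^(e+1)) = a*u^2 + u := by
      linear_combination hu - h2 (a*u^2+u)
    have k2 : (u^(2^(e+1)))^(2^(e+1)) = u^2 := by
      rw [← pow_mul, show 2^(e+1)*2^(e+1) = 2^(2*e+1+1) from by ring, hshift]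
      norm_num
    have k3 : (u^2)^(2^(e+1)) = (u^(2^(e+1)))^2 := by
      rw [← pow_mul, ← pow_mul, mul_comm]
    have hF1 : (a^(2^e)+1)^(2^(e+1)) * u^2
        = a^(2^(e+1)) * (u^(2^(e+1)))^2 + u^(2^(e+1)) := by
      calc (a^(2^e)+1)^(2^(e+1)) * u^2
          = (a^(2^e)+1)^(2^(e+1)) * (u^(2^(e+1)))^(2^(e+1)) := by rw [k2]
        _ = ((a^(2^e)+1) * u^(2^(e+1)))^(2^(e+1)) := by rw [mul_pow]
        _ = (a*u^2+u)^(2^(e+1)) := by rw [hL]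
        _ = a^(2^(e+1)) * (u^(2^(e+1)))^2 + u^(2^(e+1)) := by
            rw [hadd, mul_pow, k3]
    have h3q : (a^(2^e)+1)^2 * ((a^(2^e)+1)^(2^(e+1)) * u^2)
        = a^(2^(e+1)) * ((a^(2^e)+1)*u^(2^(e+1)))^2
          + (a^(2^e)+1)*((a^(2^e)+1)*u^(2^(e+1))) := by
      linear_combination (a^(2^e)+1)^2 * hF1
    rw [hL] at h3q
    show p.IsRoot u
    rw [hpdef]
    simp only [Polynomial.IsRoot, Polynomial.eval_add, Polynomial.eval_mul,
      Polynomial.eval_pow, Polynomial.eval_C, Polynomial.eval_X]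
    linear_combination -h3q
      + ((a^(2^e)+1)^(2^(e+1))*(a^(2^e)+1)^2*u^2 - a^(2^(e+1))*a*u^3) * h20
  -- upper bound
  have hcard_le : {u : F | (a ^ (2 ^ e) + 1) * u ^ (2 ^ (e + 1)) + a * u ^ 2 + u = 0}.ncard
      ≤ 4 := by
    have hsub : {u : F | (a ^ (2 ^ e) + 1) * u ^ (2 ^ (e + 1)) + a * u ^ 2 + u = 0}
        ⊆ (p.roots.toFinset : Set F) := by
      intro u hu
      simp only [Set.mem_setOf_eq] at hu
      simp only [Finset.coe_sort_coe, Finset.mem_coe, Multiset.mem_toFinset]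
      exact (Polynomial.mem_roots hp0).mpr (hroots u hu)
    calc {u : F | (a ^ (2 ^ e) + 1) * u ^ (2 ^ (e + 1)) + a * u ^ 2 + u = 0}.ncard
        ≤ (p.roots.toFinset : Set F).ncard := Set.ncard_le_ncard hsub (Set.toFinite _)
      _ = p.roots.toFinset.card := Set.ncard_coe_finset _
      _ ≤ Multiset.card p.roots := Multiset.toFinset_card_le _
      _ ≤ p.natDegree := Polynomial.card_roots' p
      _ ≤ 4 := hdeg
  -- lower bound
  have n1 : (0:F) ≠ u0 := fun h => hu0ne0 h.symm
  have n2 : (0:F) ≠ u1 := fun h => hu1ne0 h.symm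
  have n3 : (0:F) ≠ u0 + u1 := fun h => hu1neu0 (hEq u0 u1 h.symm).symm
  have n4 : u0 ≠ u1 := hu1neu0.symm
  have n5 : u0 ≠ u0 + u1 := fun h => hu1ne0 (by linear_combination -h)
  have n6 : u1 ≠ u0 + u1 := fun h => hu0ne0 (by linear_combination -h)
  have hTcard : ({0, u0, u1, u0+u1} : Finset F).card = 4 := by
    rw [Finset.card_insert_of_notMem (by simp [n1, n2, n3]),
      Finset.card_insert_of_notMem (by simp [n4, n5]),
      Finset.card_insert_of_notMem (by simp [n6]), Finset.card_singleton]
  have h0S : (a^(2^e)+1) * (0:F)^(2^(e+1)) + a*(0:F)^2 + 0 = 0 := by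
    rw [zero_pow (by positivity), zero_pow (by norm_num : (2:ℕ) ≠ 0)]
    ring
  have hcard_ge : 4 ≤ {u : F | (a ^ (2 ^ e) + 1) * u ^ (2 ^ (e + 1)) + a * u ^ 2 + u = 0}.ncard := by
    rw [← hTcard, ← Set.ncard_coe_finset]
    refine Set.ncard_le_ncard ?_ (Set.toFinite _)
    intro x hx
    simp only [Finset.coe_insert, Set.mem_insert_iff, Finset.coe_singleton,
      Set.mem_singleton_iff] at hx
    simp only [Set.mem_setOf_eq]
    rcases hx with h | h | h | h
    · rw [h]; exact h0S
    · rw [h]; exact hu0S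
    · rw [h]; exact hu1S
    · rw [h]; exact hSadd u0 u1 hu0S hu1S
  omega
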